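/- Let r, p ∈ ℕ, A ∈ ℝ^{r×r}, B ∈ ℝ^{r×p}, K ∈ ℝ^{p×r}, and let ς > 0, ϑ > 0, X ∈ ℝ^{r×r} symmetric positive definite, and R ∈ ℝ^{r×r} satisfy X(A − ς B K) + (A − ς B K)ᵀ X = −Rᵀ R − 2ϑ X and X B = Kᵀ. Let M ∈ ℝ^{p×p} be such that M + Mᵀ − 2ς I_p is positive semidefinite. Then for all ξ ∈ ℝ^r and w ∈ ℝ^p, 2 ξᵀ X ((A − ς B K) ξ − B (M − ς I_p) K ξ + B w) ≤ −2ϑ ξᵀ X ξ + 2 ξᵀ Kᵀ w. -/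

import Mathlib

open Matrix

theorem stmt15 (r p : ℕ)
    (A : Matrix (Fin r) (Fin r) ℝ) (B : Matrix (Fin r) (Fin p) ℝ)
    (K : Matrix (Fin p) (Fin r) ℝ) (ς ϑ : ℝ) (hς : 0 < ς) (hϑ : 0 < ϑ)
    (X : Matrix (Fin r) (Fin r) ℝ) (hX : X.PosDef)
    (R : Matrix (Fin r) (Fin r) ℝ)
    (hlyap : X * (A - ς • (B * K)) + (A - ς • (B * K))ᵀ * X = -(Rᵀ * R) - (2 * ϑ) • X)
    (hXB : X * B = Kᵀ)
    (M : Matrix (Fin p) (Fin p) ℝ)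
    (hM : (M + Mᵀ - (2 * ς) • (1 : Matrix (Fin p) (Fin p) ℝ)).PosSemidef) :
    ∀ (ξ : Fin r → ℝ) (w : Fin p → ℝ),
      2 * (ξ ⬝ᵥ (X *ᵥ ((A - ς • (B * K)) *ᵥ ξ -
          B *ᵥ ((M - ς • (1 : Matrix (Fin p) (Fin p) ℝ)) *ᵥ (K *ᵥ ξ)) + B *ᵥ w))) ≤
        -2 * ϑ * (ξ ⬝ᵥ (X *ᵥ ξ)) + 2 * (ξ ⬝ᵥ (Kᵀ *ᵥ w)) := by
  intro ξ w
  have hXsym : Xᵀ = X := by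
    have := hX.isHermitian
    simpa [Matrix.IsHermitian] using this
  set C := A - ς • (B * K) with hC
  set v := K *ᵥ ξ with hv
  -- general transpose trick
  have key : ∀ (D : Matrix (Fin r) (Fin r) ℝ), ξ ⬝ᵥ D *ᵥ ξ = ξ ⬝ᵥ Dᵀ *ᵥ ξ := by
    intro D
    rw [Matrix.dotProduct_mulVec, ← Matrix.mulVec_transpose, dotProduct_comm]
  -- term 1
  have h1 : 2 * (ξ ⬝ᵥ X *ᵥ (C *ᵥ ξ)) ≤ -2 * ϑ * (ξ ⬝ᵥ X *ᵥ ξ) := by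
    have e : 2 * (ξ ⬝ᵥ X *ᵥ (C *ᵥ ξ)) = ξ ⬝ᵥ ((X * C + Cᵀ * X) *ᵥ ξ) := by
      rw [Matrix.add_mulVec, dotProduct_add, Matrix.mulVec_mulVec]
      have : ξ ⬝ᵥ (Cᵀ * X) *ᵥ ξ = ξ ⬝ᵥ (X * C) *ᵥ ξ := by
        rw [key (Cᵀ * X), Matrix.transpose_mul, Matrix.transpose_transpose, hXsym]
      rw [this]; ring
    rw [e, hlyap]
    have hR : 0 ≤ (R *ᵥ ξ) ⬝ᵥ (R *ᵥ ξ) := by simpa [dotProduct] using Finset.sum_nonneg fun i _ => mul_self_nonneg ((R *ᵥ ξ) i)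
    have : ξ ⬝ᵥ (Rᵀ * R) *ᵥ ξ = (R *ᵥ ξ) ⬝ᵥ (R *ᵥ ξ) := by
      rw [← Matrix.mulVec_mulVec, Matrix.dotProduct_mulVec, Matrix.vecMul_transpose]
    rw [Matrix.sub_mulVec, dotProduct_sub, Matrix.neg_mulVec, dotProduct_neg, this,
      Matrix.smul_mulVec, dotProduct_smul]
    simp only [smul_eq_mul]
    linarith
  -- term 2
  have h2 : ξ ⬝ᵥ X *ᵥ (B *ᵥ ((M - ς • (1 : Matrix (Fin p) (Fin p) ℝ)) *ᵥ v))
      = v ⬝ᵥ ((M - ς • (1 : Matrix (Fin p) (Fin p) ℝ)) *ᵥ v) := by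
    rw [Matrix.mulVec_mulVec, hXB, Matrix.dotProduct_mulVec, Matrix.vecMul_transpose]
  have h2' : 0 ≤ 2 * (v ⬝ᵥ ((M - ς • (1 : Matrix (Fin p) (Fin p) ℝ)) *ᵥ v)) := by
    have := hM.dotProduct_mulVec_nonneg v
    have es : v ⬝ᵥ Mᵀ *ᵥ v = v ⬝ᵥ M *ᵥ v := by
      rw [Matrix.dotProduct_mulVec, Matrix.vecMul_transpose, dotProduct_comm]
    simp only [Matrix.sub_mulVec, Matrix.add_mulVec, dotProduct_sub, dotProduct_add,
      Matrix.smul_mulVec, dotProduct_smul, smul_eq_mul, Matrix.one_mulVec,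
      RCLike.inner_apply, starRingEnd_apply] at this ⊢
    simp only [star_trivial] at this
    rw [es] at this
    linarith
  -- term 3
  have h3 : ξ ⬝ᵥ X *ᵥ (B *ᵥ w) = ξ ⬝ᵥ Kᵀ *ᵥ w := by
    rw [Matrix.mulVec_mulVec, hXB]
  rw [Matrix.mulVec_add, Matrix.mulVec_sub, dotProduct_add, dotProduct_sub, h2, h3]
  linarith
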